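/- arXiv:math/0212030 — 5 statements merged into one kernel-verified Lean document; each statement's English description precedes it below -/
import Mathlib

section
/- With V = V₋₁ ⊕ V₀ ⊕ V₁ (one-dimensional components u, v, w) and structure constants aₙ, bₙ, cₙ, Jₙ(u⊗v⊗w^{⊗(n−2)}) = Σ_{p=1}^n (−1)^{p(n−p)} b_{n−p+1} [ C(n−2, p−2)·a_p − C(n−2, p−1)·c_p ] · v. -/
open Finset Equiv

/-- Sign `(-1)^z` for an integer `z`, valued in a field. -/
def ksign (K : Type*) [Field K] (z : ℤ) : K := if Even z then 1 else -1

/-- The Koszul sign `χ(σ)` of a permutation acting on a list of basis elements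
with degrees given by `d`. -/
def chi (K : Type*) [Field K] (d : Fin 3 → ℤ) (xs : List (Fin 3))
    (σ : Perm (Fin xs.length)) : K :=
  ((Perm.sign σ : ℤ) : K) *
    ∏ p ∈ Finset.univ.filter
      (fun p : Fin xs.length × Fin xs.length => p.1 < p.2 ∧ σ p.2 < σ p.1),
      ksign K (d (xs.get (σ p.1)) * d (xs.get (σ p.2)))

/-- `(p, n-p)`-unshuffles in `S_n`. -/
def unshuffles (p n : ℕ) : Finset (Perm (Fin n)) :=
  Finset.univ.filter (fun σ =>
    (∀ i j : Fin n, i < j → (j : ℕ) < p → σ i < σ j) ∧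
    (∀ i j : Fin n, p ≤ (i : ℕ) → i < j → σ i < σ j))

/-- The Koszul sign picked up when sorting a list of basis elements into
canonical (increasing) order; degrees given by `d`. -/
def sortSign (K : Type*) [Field K] (d : Fin 3 → ℤ) (xs : List (Fin 3)) : K :=
  ∏ p ∈ Finset.univ.filter
    (fun p : Fin xs.length × Fin xs.length => p.1 < p.2 ∧ xs.get p.2 < xs.get p.1),
    (-(ksign K (d (xs.get p.1) * d (xs.get p.2))))

/-- The generalized Jacobi expression `Jₙ = Σ_p (-1)^{p(n-p)} l_{n-p+1} ∘ l_p`,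
evaluated on a basis tensor `xs` (so `n = xs.length`), where `ell` gives the
value of each `l_m` on basis tensors (as a coordinate vector in `Fin 3 → K`),
extended by unshuffles with Koszul signs. -/
def Jac (K : Type*) [Field K] (d : Fin 3 → ℤ) (ell : List (Fin 3) → (Fin 3 → K))
    (xs : List (Fin 3)) : Fin 3 → K :=
  ∑ p ∈ Finset.Icc 1 xs.length, ((-1 : K) ^ (p * (xs.length - p))) •
    ∑ σ ∈ unshuffles p xs.length,
      chi K d xs σ •
        (fun j : Fin 3 => ∑ i : Fin 3,
          ell ((List.ofFn (fun t => xs.get (σ t))).take p) i *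
          ell (i :: (List.ofFn (fun t => xs.get (σ t))).drop p) j)

/-- The operators on `V₀ ⊕ V₁ ⊕ V₂` (basis `v = 0, w = 1, x = 2`) determined by
constants `a, b, c`:  `lₙ(v⊗w^{n-1}) = aₙ w`, `lₙ(w^n) = bₙ x`,
`lₙ(v⊗w^{n-2}⊗x) = cₙ x`, all other values zero, extended skew-symmetrically. -/
def ell012 {K : Type*} [Field K] (a b c : ℕ → K) (xs : List (Fin 3)) : Fin 3 → K :=
  sortSign K ![0, 1, 2] xs •
    (if xs.count 0 = 1 ∧ xs.count 2 = 0 then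
        (fun j : Fin 3 => if j = 1 then a xs.length else 0)
      else if xs.count 0 = 0 ∧ xs.count 2 = 0 then
        (fun j : Fin 3 => if j = 2 then b xs.length else 0)
      else if xs.count 0 = 1 ∧ xs.count 2 = 1 then
        (fun j : Fin 3 => if j = 2 then c xs.length else 0)
      else 0)

/-- The operators on `V₋₁ ⊕ V₀ ⊕ V₁` (basis `u = 0, v = 1, w = 2`, of degrees
`-1, 0, 1`) determined by constants `a, b, c`:  `lₙ(u⊗v⊗w^{n-2}) = aₙ u`,
`lₙ(u⊗w^{n-1}) = bₙ v`, `lₙ(v⊗w^{n-1}) = cₙ w`, all other values zero,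
extended skew-symmetrically. -/
def ellm {K : Type*} [Field K] (a b c : ℕ → K) (xs : List (Fin 3)) : Fin 3 → K :=
  sortSign K ![-1, 0, 1] xs •
    (if xs.count 0 = 1 ∧ xs.count 1 = 1 then
        (fun j : Fin 3 => if j = 0 then a xs.length else 0)
      else if xs.count 0 = 1 ∧ xs.count 1 = 0 then
        (fun j : Fin 3 => if j = 1 then b xs.length else 0)
      else if xs.count 0 = 0 ∧ xs.count 1 = 1 then
        (fun j : Fin 3 => if j = 2 then c xs.length else 0)
      else 0)


lemma sign_eq_signAux {n : ℕ} (f : Perm (Fin n)) : Perm.sign f = Perm.signAux f := by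
  rw [show Perm.sign f = Perm.signAux2 (List.finRange n) f from rfl]
  rw [← Perm.signAux_eq_signAux2 _ _ (Equiv.refl _) (fun _ _ => List.mem_finRange _)]
  congr 1

lemma signK {K : Type*} [Field K] {n : ℕ} (f : Perm (Fin n)) :
    ((Perm.sign f : ℤ) : K) =
      (-1 : K) ^ (Finset.univ.filter
        (fun x : Fin n × Fin n => x.1 < x.2 ∧ f x.2 < f x.1)).card := by
  rw [sign_eq_signAux]
  unfold Perm.signAux
  push_cast
  rw [Finset.prod_congr rfl (fun x _ => show (((if f x.1 ≤ f x.2 then -1 else 1 : ℤˣ) : ℤ) : K)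
      = if f x.1 ≤ f x.2 then (-1 : K) else 1 by split <;> simp)]
  rw [Finset.prod_ite, Finset.prod_const, Finset.prod_const_one, mul_one]
  congr 1
  apply Finset.card_nbij' (i := fun x => (x.2, x.1)) (j := fun x => ⟨x.2, x.1⟩)
  · intro x hx
    simp only [Finset.mem_coe, Finset.mem_filter, Perm.mem_finPairsLT] at hx
    simp only [Finset.mem_coe, Finset.mem_filter, Finset.mem_univ, true_and]
    exact ⟨hx.1, lt_of_le_of_ne hx.2 (fun h => absurd (f.injective h) (ne_of_gt hx.1))⟩
  · intro x hx
    simp only [Finset.mem_coe, Finset.mem_filter, Finset.mem_univ, true_and] at hx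
    simp only [Finset.mem_coe, Finset.mem_filter, Perm.mem_finPairsLT]
    exact ⟨hx.1, le_of_lt hx.2⟩
  · intro x _; rfl
  · intro x _; rfl

section Helpers
open List

lemma get_ccr (x y z : Fin 3) (k j : ℕ) (h : j < (x :: y :: List.replicate k z).length) :
    (x :: y :: List.replicate k z).get ⟨j, h⟩ = if j = 0 then x else if j = 1 then y else z := by
  match j with
  | 0 => rfl
  | 1 => rfl
  | (j+2) =>
    simp only [List.get_eq_getElem, List.getElem_cons_succ]
    simp at h
    rw [List.getElem_replicate]
    rfl

lemma get_cr (x z : Fin 3) (k j : ℕ) (h : j < (x :: List.replicate k z).length) :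
    (x :: List.replicate k z).get ⟨j, h⟩ = if j = 0 then x else z := by
  match j with
  | 0 => rfl
  | (j+1) =>
    simp only [List.get_eq_getElem, List.getElem_cons_succ]
    simp at h
    rw [List.getElem_replicate]
    rfl

lemma get_r (z : Fin 3) (k j : ℕ) (h : j < (List.replicate k z).length) :
    (List.replicate k z).get ⟨j, h⟩ = z := by
  simp only [List.get_eq_getElem]
  rw [List.getElem_replicate]

end Helpers

section SortSign
variable {K : Type*} [Field K]

lemma sortSign_of_sorted (d : Fin 3 → ℤ) (xs : List (Fin 3))
    (h : ∀ i j : Fin xs.length, i < j → xs.get i ≤ xs.get j) : sortSign K d xs = 1 := by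
  unfold sortSign
  rw [Finset.filter_false_of_mem, Finset.prod_empty]
  rintro x - ⟨h1, h2⟩
  exact absurd (h x.1 x.2 h1) (not_le.mpr h2)

lemma sortSign_ccr (d : Fin 3 → ℤ) (x y z : Fin 3) (hxy : x ≤ y) (hyz : y ≤ z) (k : ℕ) :
    sortSign K d (x :: y :: List.replicate k z) = 1 := by
  apply sortSign_of_sorted
  intro i j hij
  rw [get_ccr, get_ccr]
  have : (i : ℕ) < (j : ℕ) := hij
  split_ifs <;> first | exact le_refl _ | exact hxy | exact hyz | exact hxy.trans hyz | omega

lemma sortSign_cr (d : Fin 3 → ℤ) (x z : Fin 3) (hxz : x ≤ z) (k : ℕ) :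
    sortSign K d (x :: List.replicate k z) = 1 := by
  apply sortSign_of_sorted
  intro i j hij
  rw [get_cr, get_cr]
  have : (i : ℕ) < (j : ℕ) := hij
  split_ifs <;> first | exact le_refl _ | exact hxz | omega

lemma sortSign_r (d : Fin 3 → ℤ) (z : Fin 3) (k : ℕ) :
    sortSign K d (List.replicate k z) = 1 := by
  apply sortSign_of_sorted
  intro i j hij
  rw [get_r, get_r]

end SortSign

section Special
variable {K : Type*} [Field K]

lemma sortSign_202 (k : ℕ) :
    sortSign K ![-1,0,1] ((2 : Fin 3) :: 0 :: List.replicate k 2) = 1 := by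
  unfold sortSign
  have hlen : (((2:Fin 3) :: 0 :: List.replicate k 2)).length = k + 2 := by simp
  have h01 : (0 : ℕ) < ((2:Fin 3) :: 0 :: List.replicate k 2).length := by omega
  have h11 : (1 : ℕ) < ((2:Fin 3) :: 0 :: List.replicate k 2).length := by omega
  have hfil : Finset.univ.filter
      (fun p : Fin (((2:Fin 3) :: 0 :: List.replicate k 2)).length ×
        Fin (((2:Fin 3) :: 0 :: List.replicate k 2)).length =>
        p.1 < p.2 ∧ (((2:Fin 3) :: 0 :: List.replicate k 2)).get p.2 <
          (((2:Fin 3) :: 0 :: List.replicate k 2)).get p.1)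
      = {(⟨0, h01⟩, ⟨1, h11⟩)} := by
    ext x
    simp only [Finset.mem_filter, Finset.mem_univ, true_and, Finset.mem_singleton]
    constructor
    · rintro ⟨h1, h2⟩
      have e1 : (((2:Fin 3) :: 0 :: List.replicate k 2)).get x.1
          = if (x.1 : ℕ) = 0 then 2 else if (x.1 : ℕ) = 1 then 0 else 2 := by
        rw [show x.1 = ⟨(x.1 : ℕ), x.1.2⟩ from rfl]; exact get_ccr _ _ _ _ _ _
      have e2 : (((2:Fin 3) :: 0 :: List.replicate k 2)).get x.2
          = if (x.2 : ℕ) = 0 then 2 else if (x.2 : ℕ) = 1 then 0 else 2 := by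
        rw [show x.2 = ⟨(x.2 : ℕ), x.2.2⟩ from rfl]; exact get_ccr _ _ _ _ _ _
      rw [e1, e2] at h2
      have h1' : (x.1 : ℕ) < (x.2 : ℕ) := h1
      have hx1 : (x.1 : ℕ) = 0 ∧ (x.2 : ℕ) = 1 := by
        split_ifs at h2 <;> simp_all <;> omega
      have : x.1 = (⟨0, h01⟩ : Fin _) := Fin.ext hx1.1
      have : x.2 = (⟨1, h11⟩ : Fin _) := Fin.ext hx1.2
      cases x
      simp_all
    · rintro rfl
      refine ⟨by simp [Fin.lt_def], ?_⟩
      rw [show ((⟨1, h11⟩ : Fin _)) = ⟨(1:ℕ), h11⟩ from rfl]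
      rw [get_ccr, get_ccr]
      simp [Fin.lt_def]
  rw [hfil, Finset.prod_singleton]
  rw [get_ccr, get_ccr]
  norm_num [ksign]
  rw [show (![-1, 0, 1] : Fin 3 → ℤ) 2 = 1 from rfl]
  norm_num

end Special

section Ellm
variable {K : Type*} [Field K] (a b c : ℕ → K)

lemma ellm_E1 (k : ℕ) : ellm a b c ((0:Fin 3) :: 1 :: List.replicate k 2)
    = fun j => if j = 0 then a (k+2) else 0 := by
  unfold ellm
  rw [sortSign_ccr _ _ _ _ (by decide) (by decide), one_smul]
  simp [List.count_cons, List.count_replicate]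

lemma ellm_E2 (k : ℕ) : ellm a b c ((1:Fin 3) :: List.replicate k 2)
    = fun j => if j = 2 then c (k+1) else 0 := by
  unfold ellm
  rw [sortSign_cr _ _ _ (by decide), one_smul]
  simp [List.count_cons, List.count_replicate]

lemma ellm_E3 (k : ℕ) : ellm a b c ((0:Fin 3) :: List.replicate k 2)
    = fun j => if j = 1 then b (k+1) else 0 := by
  unfold ellm
  rw [sortSign_cr _ _ _ (by decide), one_smul]
  simp [List.count_cons, List.count_replicate]

lemma ellm_E4 (k : ℕ) : ellm a b c ((2:Fin 3) :: 0 :: List.replicate k 2)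
    = fun j => if j = 1 then b (k+2) else 0 := by
  unfold ellm
  rw [sortSign_202, one_smul]
  simp [List.count_cons, List.count_replicate]

lemma ellm_E5 (k : ℕ) : ellm a b c (List.replicate k (2:Fin 3)) = 0 := by
  unfold ellm
  rw [sortSign_r, one_smul]
  simp [List.count_replicate]

lemma ellm_E6 (k : ℕ) : ellm a b c ((1:Fin 3) :: 1 :: List.replicate k 2) = 0 := by
  unfold ellm
  rw [sortSign_ccr _ _ _ _ (by decide) (by decide), one_smul]
  simp [List.count_cons, List.count_replicate]

end Ellm

section Unshuf
variable {n p : ℕ}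

lemma mem_unshuffles {σ : Perm (Fin n)} : σ ∈ unshuffles p n ↔
    (∀ i j : Fin n, i < j → (j : ℕ) < p → σ i < σ j) ∧
    (∀ i j : Fin n, p ≤ (i : ℕ) → i < j → σ i < σ j) := by
  simp [unshuffles]

/-- The function underlying the unshuffle associated to a subset. -/
noncomputable def shufFun (S : Finset (Fin n)) (hS : S.card = p) (hp : p ≤ n) :
    Fin n → Fin n := fun j =>
  if h : (j : ℕ) < p then S.orderEmbOfFin hS ⟨j, h⟩
  else Sᶜ.orderEmbOfFin (by rw [Finset.card_compl, hS, Fintype.card_fin])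
    ⟨(j : ℕ) - p, by have := j.2; omega⟩

lemma shufFun_injective (S : Finset (Fin n)) (hS : S.card = p) (hp : p ≤ n) :
    Function.Injective (shufFun S hS hp) := by
  intro j1 j2 h
  unfold shufFun at h
  by_cases h1 : (j1 : ℕ) < p <;> by_cases h2 : (j2 : ℕ) < p
  · rw [dif_pos h1, dif_pos h2] at h
    have := (S.orderEmbOfFin hS).injective h
    exact Fin.ext (by simpa using congrArg Fin.val this)
  · rw [dif_pos h1, dif_neg h2] at h
    have m1 := Finset.orderEmbOfFin_mem S hS ⟨(j1 : ℕ), h1⟩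
    have m2 := Finset.orderEmbOfFin_mem Sᶜ (by rw [Finset.card_compl, hS, Fintype.card_fin])
      ⟨(j2 : ℕ) - p, by have := j2.2; omega⟩
    rw [h] at m1
    rw [Finset.mem_compl] at m2
    exact absurd m1 m2
  · rw [dif_neg h1, dif_pos h2] at h
    have m1 := Finset.orderEmbOfFin_mem S hS ⟨(j2 : ℕ), h2⟩
    have m2 := Finset.orderEmbOfFin_mem Sᶜ (by rw [Finset.card_compl, hS, Fintype.card_fin])
      ⟨(j1 : ℕ) - p, by have := j1.2; omega⟩
    rw [← h] at m1
    rw [Finset.mem_compl] at m2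
    exact absurd m1 m2
  · rw [dif_neg h1, dif_neg h2] at h
    have := (Sᶜ.orderEmbOfFin (by rw [Finset.card_compl, hS, Fintype.card_fin])).injective h
    have := congrArg Fin.val this
    simp only at this
    exact Fin.ext (by omega)

/-- The unshuffle associated to a subset. -/
noncomputable def shufPerm (S : Finset (Fin n)) (hS : S.card = p) (hp : p ≤ n) :
    Perm (Fin n) :=
  Equiv.ofBijective _ (Finite.injective_iff_bijective.mp (shufFun_injective S hS hp))

lemma shufPerm_apply (S : Finset (Fin n)) (hS : S.card = p) (hp : p ≤ n) (j : Fin n) :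
    shufPerm S hS hp j = shufFun S hS hp j := rfl

lemma shufPerm_mem (S : Finset (Fin n)) (hS : S.card = p) (hp : p ≤ n) :
    shufPerm S hS hp ∈ unshuffles p n := by
  rw [mem_unshuffles]
  constructor
  · intro i j hij hj
    have hi : (i : ℕ) < p := lt_trans (by exact_mod_cast hij) hj
    show shufFun S hS hp i < shufFun S hS hp j
    unfold shufFun
    rw [dif_pos hi, dif_pos hj]
    exact (S.orderEmbOfFin hS).strictMono (by exact_mod_cast hij)
  · intro i j hi hij
    have hj : ¬ (j : ℕ) < p := by have : (i:ℕ) < (j:ℕ) := hij; omega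
    show shufFun S hS hp i < shufFun S hS hp j
    unfold shufFun
    rw [dif_neg (not_lt.mpr hi), dif_neg hj]
    apply (Sᶜ.orderEmbOfFin _).strictMono
    have : (i:ℕ) < (j:ℕ) := hij
    exact Fin.mk_lt_mk.mpr (by omega)

lemma shufPerm_symm_lt_iff (S : Finset (Fin n)) (hS : S.card = p) (hp : p ≤ n) (y : Fin n) :
    (((shufPerm S hS hp).symm y : Fin n) : ℕ) < p ↔ y ∈ S := by
  have happ : shufPerm S hS hp ((shufPerm S hS hp).symm y) = y := Equiv.apply_symm_apply _ _
  set k := (shufPerm S hS hp).symm y with hk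
  rw [shufPerm_apply, shufFun] at happ
  constructor
  · intro h
    rw [dif_pos h] at happ
    rw [← happ]
    exact Finset.orderEmbOfFin_mem _ _ _
  · intro hy
    by_contra h
    rw [dif_neg h] at happ
    have := Finset.orderEmbOfFin_mem Sᶜ (by rw [Finset.card_compl, hS, Fintype.card_fin])
      ⟨(k : ℕ) - p, by have := k.2; omega⟩
    rw [happ, Finset.mem_compl] at this
    exact this hy

lemma unshuffles_filter_card {σ : Perm (Fin n)} (hσ : σ ∈ unshuffles p n) (hp : p ≤ n) :
    (Finset.univ.filter (fun y : Fin n => ((σ.symm y : Fin n) : ℕ) < p)).card = p := by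
  have : (Finset.univ.filter (fun y : Fin n => ((σ.symm y : Fin n) : ℕ) < p))
      = Finset.map ⟨fun t : Fin p => σ (Fin.castLE hp t), fun a b h => by
          simpa using σ.injective h⟩ Finset.univ := by
    ext y
    simp only [Finset.mem_filter, Finset.mem_univ, true_and, Finset.mem_map,
      Function.Embedding.coeFn_mk]
    constructor
    · intro h
      exact ⟨⟨(σ.symm y : Fin n), h⟩, by simp [Fin.castLE]⟩
    · rintro ⟨t, rfl⟩
      simp [Fin.castLE]
  rw [this, Finset.card_map, Finset.card_univ, Fintype.card_fin]

lemma unshuffle_eq_shufPerm {σ : Perm (Fin n)} (hσ : σ ∈ unshuffles p n) (hp : p ≤ n) :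
    σ = shufPerm (Finset.univ.filter (fun y : Fin n => ((σ.symm y : Fin n) : ℕ) < p))
      (unshuffles_filter_card hσ hp) hp := by
  rw [mem_unshuffles] at hσ
  obtain ⟨hL, hR⟩ := hσ
  set S := Finset.univ.filter (fun y : Fin n => ((σ.symm y : Fin n) : ℕ) < p) with hSdef
  have hS : S.card = p := unshuffles_filter_card (by rw [mem_unshuffles]; exact ⟨hL, hR⟩) hp
  have hf : (fun i : Fin p => σ (Fin.castLE hp i)) = ⇑(S.orderEmbOfFin hS) := by
    apply Finset.orderEmbOfFin_unique
    · intro x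
      simp only [hSdef, Finset.mem_filter, Finset.mem_univ, true_and, Equiv.symm_apply_apply]
      exact x.2
    · intro i j hij
      exact hL _ _ (by exact_mod_cast hij) (by simpa using j.2)
  have hSc : Sᶜ.card = n - p := by rw [Finset.card_compl, hS, Fintype.card_fin]
  have hg : (fun i : Fin (n - p) => σ ⟨p + (i : ℕ), by have := i.2; omega⟩)
      = ⇑(Sᶜ.orderEmbOfFin hSc) := by
    apply Finset.orderEmbOfFin_unique
    · intro x
      simp only [hSdef, Finset.mem_compl, Finset.mem_filter, Finset.mem_univ, true_and,
        Equiv.symm_apply_apply]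
      omega
    · intro i j hij
      refine hR _ _ (by simp) ?_
      simp only [Fin.mk_lt_mk]
      have : (i:ℕ) < (j:ℕ) := hij
      omega
  apply Equiv.ext
  intro j
  show σ j = shufFun S hS hp j
  unfold shufFun
  by_cases h : (j : ℕ) < p
  · rw [dif_pos h, ← hf]
    rfl
  · rw [dif_neg h, ← hg]
    exact (congrArg σ (Fin.ext (by simp only []; omega))).symm

section Count
variable {n : ℕ}

lemma card_compl_pair (z0 z1 : Fin n) (hz : z0 ≠ z1) :
    (({z0, z1} : Finset (Fin n))ᶜ).card = n - 2 := by
  rw [Finset.card_compl, Finset.card_pair hz, Fintype.card_fin]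

lemma card_filter_both {p : ℕ} (hp2 : 2 ≤ p) (z0 z1 : Fin n) (hz : z0 ≠ z1) :
    ((Finset.powersetCard p (Finset.univ : Finset (Fin n))).filter
      (fun S => z0 ∈ S ∧ z1 ∈ S)).card = (n - 2).choose (p - 2) := by
  rw [← card_compl_pair z0 z1 hz, ← Finset.card_powersetCard]
  apply Finset.card_nbij' (i := fun S => (S.erase z0).erase z1)
    (j := fun T => insert z0 (insert z1 T))
  · intro S hS
    simp only [Finset.mem_coe, Finset.mem_filter, Finset.mem_powersetCard] at hS
    obtain ⟨⟨-, hcard⟩, h0, h1⟩ := hS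
    rw [Finset.mem_coe, Finset.mem_powersetCard]
    constructor
    · intro x hx
      simp only [Finset.mem_erase] at hx
      simp only [Finset.mem_compl, Finset.mem_insert, Finset.mem_singleton]
      push_neg
      exact ⟨hx.2.1, hx.1⟩
    · rw [Finset.card_erase_of_mem (Finset.mem_erase.mpr ⟨hz.symm, h1⟩),
        Finset.card_erase_of_mem h0, hcard]
      omega
  · intro T hT
    rw [Finset.mem_coe, Finset.mem_powersetCard] at hT
    obtain ⟨hsub, hcard⟩ := hT
    have h1T : z1 ∉ T := fun h => by simpa using hsub h
    have h0T : z0 ∉ insert z1 T := by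
      simp only [Finset.mem_insert]
      push_neg
      exact ⟨hz, fun h => by simpa using hsub h⟩
    simp only [Finset.mem_coe, Finset.mem_filter, Finset.mem_powersetCard]
    refine ⟨⟨Finset.subset_univ _, ?_⟩, Finset.mem_insert_self _ _, ?_⟩
    · rw [Finset.card_insert_of_notMem h0T, Finset.card_insert_of_notMem h1T, hcard]
      omega
    · exact Finset.mem_insert_of_mem (Finset.mem_insert_self _ _)
  · intro S hS
    simp only [Finset.mem_coe, Finset.mem_filter] at hS
    obtain ⟨-, h0, h1⟩ := hS
    beta_reduce
    rw [Finset.insert_erase (Finset.mem_erase.mpr ⟨hz.symm, h1⟩), Finset.insert_erase h0]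
  · intro T hT
    rw [Finset.mem_coe, Finset.mem_powersetCard] at hT
    have h1T : z1 ∉ T := fun h => by simpa using hT.1 h
    have h0T : z0 ∉ insert z1 T := by
      simp only [Finset.mem_insert]
      push_neg
      exact ⟨hz, fun h => by simpa using hT.1 h⟩
    beta_reduce
    rw [Finset.erase_insert h0T, Finset.erase_insert h1T]

lemma card_filter_one {p : ℕ} (hp1 : 1 ≤ p) (z0 z1 : Fin n) (hz : z0 ≠ z1) :
    ((Finset.powersetCard p (Finset.univ : Finset (Fin n))).filter
      (fun S => z1 ∈ S ∧ z0 ∉ S)).card = (n - 2).choose (p - 1) := by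
  rw [← card_compl_pair z0 z1 hz, ← Finset.card_powersetCard]
  apply Finset.card_nbij' (i := fun S => S.erase z1) (j := fun T => insert z1 T)
  · intro S hS
    simp only [Finset.mem_coe, Finset.mem_filter, Finset.mem_powersetCard] at hS
    obtain ⟨⟨-, hcard⟩, h1, h0⟩ := hS
    rw [Finset.mem_coe, Finset.mem_powersetCard]
    constructor
    · intro x hx
      simp only [Finset.mem_erase] at hx
      simp only [Finset.mem_compl, Finset.mem_insert, Finset.mem_singleton]
      push_neg
      exact ⟨fun he => h0 (he ▸ hx.2), hx.1⟩
    · rw [Finset.card_erase_of_mem h1, hcard]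
  · intro T hT
    rw [Finset.mem_coe, Finset.mem_powersetCard] at hT
    obtain ⟨hsub, hcard⟩ := hT
    have h1T : z1 ∉ T := fun h => by simpa using hsub h
    simp only [Finset.mem_coe, Finset.mem_filter, Finset.mem_powersetCard]
    refine ⟨⟨Finset.subset_univ _, ?_⟩, Finset.mem_insert_self _ _, ?_⟩
    · rw [Finset.card_insert_of_notMem h1T, hcard]
      omega
    · simp only [Finset.mem_insert]
      push_neg
      exact ⟨hz, fun h => by simpa using hsub h⟩
  · intro S hS
    simp only [Finset.mem_coe, Finset.mem_filter] at hS
    exact Finset.insert_erase hS.2.1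
  · intro T hT
    rw [Finset.mem_coe, Finset.mem_powersetCard] at hT
    exact Finset.erase_insert (fun h => by simpa using hT.1 h)

lemma card_filter_both_one (z0 z1 : Fin n) (hz : z0 ≠ z1) :
    ((Finset.powersetCard 1 (Finset.univ : Finset (Fin n))).filter
      (fun S => z0 ∈ S ∧ z1 ∈ S)).card = 0 := by
  rw [Finset.card_eq_zero]
  rw [Finset.eq_empty_iff_forall_notMem]
  intro S hS
  simp only [Finset.mem_filter, Finset.mem_powersetCard] at hS
  obtain ⟨⟨-, hcard⟩, h0, h1⟩ := hS
  have : ({z0, z1} : Finset (Fin n)) ⊆ S := by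
    intro x hx
    simp only [Finset.mem_insert, Finset.mem_singleton] at hx
    rcases hx with rfl | rfl <;> assumption
  have := Finset.card_le_card this
  rw [Finset.card_pair hz, hcard] at this
  omega

end Count

def bl (m : ℕ) : List (Fin 3) := (0 : Fin 3) :: 1 :: List.replicate m 2

lemma bl_len (m : ℕ) : (bl m).length = m + 2 := by simp [bl]

lemma getElem_ccr (x y z : Fin 3) (k j : ℕ) (h : j < (x :: y :: List.replicate k z).length) :
    (x :: y :: List.replicate k z)[j] = if j = 0 then x else if j = 1 then y else z := by
  match j with
  | 0 => rfl
  | 1 => rfl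
  | (j+2) =>
    simp only [List.getElem_cons_succ]
    simp at h
    rw [List.getElem_replicate]
    rfl

lemma getElem_cr (x z : Fin 3) (k j : ℕ) (h : j < (x :: List.replicate k z).length) :
    (x :: List.replicate k z)[j] = if j = 0 then x else z := by
  match j with
  | 0 => rfl
  | (j+1) =>
    simp only [List.getElem_cons_succ]
    simp at h
    rw [List.getElem_replicate]
    rfl

lemma bl_get {m : ℕ} (j : Fin (bl m).length) :
    (bl m).get j = if (j : ℕ) = 0 then 0 else if (j : ℕ) = 1 then 1 else 2 := by
  show (bl m)[(j : ℕ)] = _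
  exact getElem_ccr _ _ _ _ _ j.2

section MinFacts
variable {n p : ℕ} {σ : Perm (Fin n)}

lemma left_min (hσ : σ ∈ unshuffles p n) {z0 : Fin n} (hz0 : (z0 : ℕ) = 0) {y : Fin n}
    (hy : ((σ.symm y : Fin n) : ℕ) < p) : σ z0 ≤ y := by
  rw [mem_unshuffles] at hσ
  by_cases hk : σ.symm y = z0
  · rw [← hk, Equiv.apply_symm_apply]
  · have hne : ((σ.symm y : Fin n) : ℕ) ≠ 0 := fun h => hk (Fin.ext (by rw [h, hz0]))
    have h1 : z0 < σ.symm y := by rw [Fin.lt_def, hz0]; omega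
    have := hσ.1 z0 (σ.symm y) h1 hy
    rw [Equiv.apply_symm_apply] at this
    exact le_of_lt this

lemma right_min (hσ : σ ∈ unshuffles p n) {zp : Fin n} (hzp : (zp : ℕ) = p) {y : Fin n}
    (hy : p ≤ ((σ.symm y : Fin n) : ℕ)) : σ zp ≤ y := by
  rw [mem_unshuffles] at hσ
  by_cases hk : σ.symm y = zp
  · rw [← hk, Equiv.apply_symm_apply]
  · have hne : ((σ.symm y : Fin n) : ℕ) ≠ p := fun h => hk (Fin.ext (by rw [h, hzp]))
    have h1 : zp < σ.symm y := by rw [Fin.lt_def, hzp]; omega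
    have := hσ.2 zp (σ.symm y) (le_of_eq hzp.symm) h1
    rw [Equiv.apply_symm_apply] at this
    exact le_of_lt this

lemma caseA_facts (hσ : σ ∈ unshuffles p n) {z0 z1 : Fin n} (hz0 : (z0 : ℕ) = 0)
    (hz1 : (z1 : ℕ) = 1) (h0 : ((σ.symm z0 : Fin n) : ℕ) < p)
    (h1 : ((σ.symm z1 : Fin n) : ℕ) < p) : σ z0 = z0 ∧ σ z1 = z1 := by
  have hA : σ z0 = z0 := by
    have := left_min hσ hz0 h0
    rw [Fin.le_def, hz0] at this
    exact Fin.ext (by omega)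
  refine ⟨hA, ?_⟩
  by_contra hne
  -- k := σ.symm z1 has val ≠ 1
  have hkne1 : ((σ.symm z1 : Fin n) : ℕ) ≠ 1 := by
    intro h
    apply hne
    have he : σ.symm z1 = z1 := Fin.ext (by rw [h, hz1])
    exact (congrArg σ he).symm.trans (Equiv.apply_symm_apply σ z1)
  have hkne0 : ((σ.symm z1 : Fin n) : ℕ) ≠ 0 := by
    intro h
    have : σ.symm z1 = z0 := Fin.ext (by rw [h, hz0])
    have : σ z0 = z1 := by rw [← this, Equiv.apply_symm_apply]
    rw [hA] at this
    exact absurd (congrArg Fin.val this) (by rw [hz0, hz1]; omega)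
  rw [mem_unshuffles] at hσ
  have hlt : z1 < σ.symm z1 := by rw [Fin.lt_def, hz1]; omega
  have := hσ.1 z1 (σ.symm z1) hlt h1
  rw [Equiv.apply_symm_apply, Fin.lt_def, hz1] at this
  -- σ z1 has val 0, so σ z1 = z0 = σ z0, contradiction
  have : σ z1 = z0 := Fin.ext (by rw [hz0]; omega)
  have := σ.injective (this.trans hA.symm)
  exact absurd (congrArg Fin.val this) (by rw [hz0, hz1]; omega)

lemma caseB_facts (hσ : σ ∈ unshuffles p n) (hp1 : 1 ≤ p) {z0 z1 zp : Fin n}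
    (hz0 : (z0 : ℕ) = 0) (hz1 : (z1 : ℕ) = 1) (hzp : (zp : ℕ) = p)
    (h0 : ¬ ((σ.symm z0 : Fin n) : ℕ) < p) (h1 : ((σ.symm z1 : Fin n) : ℕ) < p) :
    σ z0 = z1 ∧ σ zp = z0 := by
  constructor
  · have hle := left_min hσ hz0 h1
    rw [Fin.le_def, hz1] at hle
    have hne0 : ((σ z0 : Fin n) : ℕ) ≠ 0 := by
      intro h
      have he : σ z0 = z0 := Fin.ext (by rw [h, hz0])
      have : σ.symm z0 = z0 := (congrArg σ.symm he).symm.trans (Equiv.symm_apply_apply σ z0)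
      rw [this, hz0] at h0
      omega
    exact Fin.ext (by rw [hz1]; omega)
  · have hle := right_min hσ hzp (le_of_not_gt h0)
    rw [Fin.le_def, hz0] at hle
    exact Fin.ext (by rw [hz0]; omega)

lemma caseC_facts (hσ : σ ∈ unshuffles p n) (hp1 : 1 ≤ p) {z0 z1 zp : Fin n}
    (hz0 : (z0 : ℕ) = 0) (hz1 : (z1 : ℕ) = 1) (hzp : (zp : ℕ) = p)
    (h0 : ((σ.symm z0 : Fin n) : ℕ) < p) (h1 : ¬ ((σ.symm z1 : Fin n) : ℕ) < p) :
    σ z0 = z0 ∧ σ zp = z1 := by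
  have hA : σ z0 = z0 := by
    have := left_min hσ hz0 h0
    rw [Fin.le_def, hz0] at this
    exact Fin.ext (by omega)
  refine ⟨hA, ?_⟩
  have hle := right_min hσ hzp (le_of_not_gt h1)
  rw [Fin.le_def, hz1] at hle
  have hne0 : ((σ zp : Fin n) : ℕ) ≠ 0 := by
    intro h
    have he : σ zp = z0 := Fin.ext (by rw [h, hz0])
    have := σ.injective (he.trans hA.symm)
    exact absurd (congrArg Fin.val this) (by rw [hz0, hzp]; omega)
  exact Fin.ext (by rw [hz1]; omega)

end MinFacts

section Lists
variable {m p : ℕ} {σ : Perm (Fin (bl m).length)}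

lemma get_two {y : Fin (bl m).length} (h0 : (y : ℕ) ≠ 0) (h1 : (y : ℕ) ≠ 1) :
    (bl m).get y = 2 := by rw [bl_get]; simp [h0, h1]

lemma get_zero {y : Fin (bl m).length} (h0 : (y : ℕ) = 0) : (bl m).get y = 0 := by
  rw [bl_get]; simp [h0]

lemma get_one {y : Fin (bl m).length} (h1 : (y : ℕ) = 1) : (bl m).get y = 1 := by
  rw [bl_get, if_neg (by omega), if_pos h1]

lemma takeA (hp : p ≤ (bl m).length) (h2 : 2 ≤ p) {z0 z1 : Fin (bl m).length}
    (hz0 : (z0 : ℕ) = 0) (hz1 : (z1 : ℕ) = 1) (h0 : σ z0 = z0) (h1 : σ z1 = z1) :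
    (List.ofFn fun t => (bl m).get (σ t)).take p
      = (0 : Fin 3) :: 1 :: List.replicate (p - 2) 2 := by
  have hlen := bl_len m
  apply List.ext_getElem
  · simp; omega
  · intro i hi1 hi2
    have hiN : i < (bl m).length := by simp at hi1; omega
    have hip : i < p := by simp at hi1; omega
    rw [List.getElem_take, List.getElem_ofFn, getElem_ccr]
    by_cases i0 : i = 0
    · subst i0
      have : (⟨0, by omega⟩ : Fin (bl m).length) = z0 := Fin.ext (by show (0:ℕ) = (z0:ℕ); omega)
      rw [show (⟨(0:ℕ), _⟩ : Fin (bl m).length) = z0 from this, h0, get_zero hz0]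
      simp
    by_cases i1 : i = 1
    · subst i1
      have : (⟨1, by omega⟩ : Fin (bl m).length) = z1 := Fin.ext (by show (1:ℕ) = (z1:ℕ); omega)
      rw [show (⟨(1:ℕ), _⟩ : Fin (bl m).length) = z1 from this, h1, get_one hz1]
      simp
    · have hv0 : ((σ ⟨i, by simpa using hiN⟩ : Fin (bl m).length) : ℕ) ≠ 0 := by
        intro h
        have he : σ ⟨i, by simpa using hiN⟩ = z0 := Fin.ext (by rw [h, hz0])
        have := σ.injective (he.trans h0.symm)
        exact i0 (by simpa [hz0] using congrArg Fin.val this)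
      have hv1 : ((σ ⟨i, by simpa using hiN⟩ : Fin (bl m).length) : ℕ) ≠ 1 := by
        intro h
        have he : σ ⟨i, by simpa using hiN⟩ = z1 := Fin.ext (by rw [h, hz1])
        have := σ.injective (he.trans h1.symm)
        exact i1 (by simpa [hz1] using congrArg Fin.val this)
      rw [get_two hv0 hv1]
      simp [i0, i1]

lemma dropA (hp : p ≤ (bl m).length) (h2 : 2 ≤ p) {z0 z1 : Fin (bl m).length}
    (hz0 : (z0 : ℕ) = 0) (hz1 : (z1 : ℕ) = 1) (h0 : σ z0 = z0) (h1 : σ z1 = z1) :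
    (List.ofFn fun t => (bl m).get (σ t)).drop p
      = List.replicate ((bl m).length - p) 2 := by
  have hlen := bl_len m
  apply List.ext_getElem
  · simp
  · intro i hi1 hi2
    have hiN : p + i < (bl m).length := by simp at hi1; omega
    rw [List.getElem_drop, List.getElem_ofFn, List.getElem_replicate]
    have hv0 : ((σ ⟨p + i, by simpa using hiN⟩ : Fin (bl m).length) : ℕ) ≠ 0 := by
      intro h
      have he : σ ⟨p + i, by simpa using hiN⟩ = z0 := Fin.ext (by rw [h, hz0])
      have := σ.injective (he.trans h0.symm)
      have := congrArg Fin.val this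
      simp [hz0] at this
      omega
    have hv1 : ((σ ⟨p + i, by simpa using hiN⟩ : Fin (bl m).length) : ℕ) ≠ 1 := by
      intro h
      have he : σ ⟨p + i, by simpa using hiN⟩ = z1 := Fin.ext (by rw [h, hz1])
      have := σ.injective (he.trans h1.symm)
      have := congrArg Fin.val this
      simp [hz1] at this
      omega
    rw [get_two hv0 hv1]

lemma takeB (hp : p ≤ (bl m).length) (hp1 : 1 ≤ p) {z0 z1 : Fin (bl m).length}
    (hz0 : (z0 : ℕ) = 0) (hz1 : (z1 : ℕ) = 1) (h0 : σ z0 = z1)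
    (hs0 : p ≤ ((σ.symm z0 : Fin (bl m).length) : ℕ)) :
    (List.ofFn fun t => (bl m).get (σ t)).take p
      = (1 : Fin 3) :: List.replicate (p - 1) 2 := by
  have hlen := bl_len m
  apply List.ext_getElem
  · simp; omega
  · intro i hi1 hi2
    have hiN : i < (bl m).length := by simp at hi1; omega
    have hip : i < p := by simp at hi1; omega
    rw [List.getElem_take, List.getElem_ofFn, getElem_cr]
    by_cases i0 : i = 0
    · subst i0
      have : (⟨0, by omega⟩ : Fin (bl m).length) = z0 := Fin.ext (by show (0:ℕ) = (z0:ℕ); omega)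
      rw [show (⟨(0:ℕ), _⟩ : Fin (bl m).length) = z0 from this, h0, get_one hz1]
      simp
    · have hv0 : ((σ ⟨i, by simpa using hiN⟩ : Fin (bl m).length) : ℕ) ≠ 0 := by
        intro h
        have he : σ ⟨i, by simpa using hiN⟩ = z0 := Fin.ext (by rw [h, hz0])
        have : (⟨i, by simpa using hiN⟩ : Fin (bl m).length) = σ.symm z0 := by
          rw [← he, Equiv.symm_apply_apply]
        have := congrArg Fin.val this
        simp at this
        omega
      have hv1 : ((σ ⟨i, by simpa using hiN⟩ : Fin (bl m).length) : ℕ) ≠ 1 := by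
        intro h
        have he : σ ⟨i, by simpa using hiN⟩ = z1 := Fin.ext (by rw [h, hz1])
        have := σ.injective (he.trans h0.symm)
        exact i0 (by simpa [hz0] using congrArg Fin.val this)
      rw [get_two hv0 hv1]
      simp [i0]

lemma dropB (hpN : p < (bl m).length) {z0 z1 zp : Fin (bl m).length}
    (hz0 : (z0 : ℕ) = 0) (hz1 : (z1 : ℕ) = 1) (hzp : (zp : ℕ) = p)
    (h0 : σ z0 = z1) (hzp0 : σ zp = z0) :
    (List.ofFn fun t => (bl m).get (σ t)).drop p
      = (0 : Fin 3) :: List.replicate ((bl m).length - p - 1) 2 := by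
  have hlen := bl_len m
  apply List.ext_getElem
  · simp; omega
  · intro i hi1 hi2
    have hiN : p + i < (bl m).length := by simp at hi1; omega
    rw [List.getElem_drop, List.getElem_ofFn, getElem_cr]
    by_cases i0 : i = 0
    · subst i0
      have : (⟨p + 0, by omega⟩ : Fin (bl m).length) = zp := Fin.ext (by show p + 0 = (zp:ℕ); omega)
      rw [show (⟨p + (0:ℕ), _⟩ : Fin (bl m).length) = zp from this, hzp0, get_zero hz0]
      simp
    · have hv0 : ((σ ⟨p + i, by simpa using hiN⟩ : Fin (bl m).length) : ℕ) ≠ 0 := by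
        intro h
        have he : σ ⟨p + i, by simpa using hiN⟩ = z0 := Fin.ext (by rw [h, hz0])
        have := σ.injective (he.trans hzp0.symm)
        have := congrArg Fin.val this
        simp [hzp] at this
        omega
      have hv1 : ((σ ⟨p + i, by simpa using hiN⟩ : Fin (bl m).length) : ℕ) ≠ 1 := by
        intro h
        have he : σ ⟨p + i, by simpa using hiN⟩ = z1 := Fin.ext (by rw [h, hz1])
        have := σ.injective (he.trans h0.symm)
        have := congrArg Fin.val this
        simp [hz0] at this
        omega
      rw [get_two hv0 hv1]
      simp [i0]

lemma takeC (hp : p ≤ (bl m).length) (hp1 : 1 ≤ p) {z0 z1 : Fin (bl m).length}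
    (hz0 : (z0 : ℕ) = 0) (hz1 : (z1 : ℕ) = 1) (h0 : σ z0 = z0)
    (hs1 : p ≤ ((σ.symm z1 : Fin (bl m).length) : ℕ)) :
    (List.ofFn fun t => (bl m).get (σ t)).take p
      = (0 : Fin 3) :: List.replicate (p - 1) 2 := by
  have hlen := bl_len m
  apply List.ext_getElem
  · simp; omega
  · intro i hi1 hi2
    have hiN : i < (bl m).length := by simp at hi1; omega
    have hip : i < p := by simp at hi1; omega
    rw [List.getElem_take, List.getElem_ofFn, getElem_cr]
    by_cases i0 : i = 0
    · subst i0
      have : (⟨0, by omega⟩ : Fin (bl m).length) = z0 := Fin.ext (by show (0:ℕ) = (z0:ℕ); omega)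
      rw [show (⟨(0:ℕ), _⟩ : Fin (bl m).length) = z0 from this, h0, get_zero hz0]
      simp
    · have hv0 : ((σ ⟨i, by simpa using hiN⟩ : Fin (bl m).length) : ℕ) ≠ 0 := by
        intro h
        have he : σ ⟨i, by simpa using hiN⟩ = z0 := Fin.ext (by rw [h, hz0])
        have := σ.injective (he.trans h0.symm)
        exact i0 (by simpa [hz0] using congrArg Fin.val this)
      have hv1 : ((σ ⟨i, by simpa using hiN⟩ : Fin (bl m).length) : ℕ) ≠ 1 := by
        intro h
        have he : σ ⟨i, by simpa using hiN⟩ = z1 := Fin.ext (by rw [h, hz1])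
        have : (⟨i, by simpa using hiN⟩ : Fin (bl m).length) = σ.symm z1 := by
          rw [← he, Equiv.symm_apply_apply]
        have := congrArg Fin.val this
        simp at this
        omega
      rw [get_two hv0 hv1]
      simp [i0]

lemma dropC (hpN : p < (bl m).length) {z0 z1 zp : Fin (bl m).length}
    (hz0 : (z0 : ℕ) = 0) (hz1 : (z1 : ℕ) = 1) (hzp : (zp : ℕ) = p)
    (h0 : σ z0 = z0) (hzp1 : σ zp = z1) :
    (List.ofFn fun t => (bl m).get (σ t)).drop p
      = (1 : Fin 3) :: List.replicate ((bl m).length - p - 1) 2 := by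
  have hlen := bl_len m
  apply List.ext_getElem
  · simp; omega
  · intro i hi1 hi2
    have hiN : p + i < (bl m).length := by simp at hi1; omega
    rw [List.getElem_drop, List.getElem_ofFn, getElem_cr]
    by_cases i0 : i = 0
    · subst i0
      have : (⟨p + 0, by omega⟩ : Fin (bl m).length) = zp := Fin.ext (by show p + 0 = (zp:ℕ); omega)
      rw [show (⟨p + (0:ℕ), _⟩ : Fin (bl m).length) = zp from this, hzp1, get_one hz1]
      simp
    · have hv0 : ((σ ⟨p + i, by simpa using hiN⟩ : Fin (bl m).length) : ℕ) ≠ 0 := by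
        intro h
        have he : σ ⟨p + i, by simpa using hiN⟩ = z0 := Fin.ext (by rw [h, hz0])
        have := σ.injective (he.trans h0.symm)
        have := congrArg Fin.val this
        simp [hz0] at this
        omega
      have hv1 : ((σ ⟨p + i, by simpa using hiN⟩ : Fin (bl m).length) : ℕ) ≠ 1 := by
        intro h
        have he : σ ⟨p + i, by simpa using hiN⟩ = z1 := Fin.ext (by rw [h, hz1])
        have := σ.injective (he.trans hzp1.symm)
        have := congrArg Fin.val this
        simp [hzp] at this
        omega
      rw [get_two hv0 hv1]
      simp [i0]

lemma takeD (hp : p ≤ (bl m).length) {z0 z1 : Fin (bl m).length}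
    (hz0 : (z0 : ℕ) = 0) (hz1 : (z1 : ℕ) = 1)
    (hs0 : p ≤ ((σ.symm z0 : Fin (bl m).length) : ℕ))
    (hs1 : p ≤ ((σ.symm z1 : Fin (bl m).length) : ℕ)) :
    (List.ofFn fun t => (bl m).get (σ t)).take p = List.replicate p 2 := by
  have hlen := bl_len m
  apply List.ext_getElem
  · simp; omega
  · intro i hi1 hi2
    have hiN : i < (bl m).length := by simp at hi1; omega
    have hip : i < p := by simp at hi1; omega
    rw [List.getElem_take, List.getElem_ofFn, List.getElem_replicate]
    have hv0 : ((σ ⟨i, by simpa using hiN⟩ : Fin (bl m).length) : ℕ) ≠ 0 := by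
      intro h
      have he : σ ⟨i, by simpa using hiN⟩ = z0 := Fin.ext (by rw [h, hz0])
      have : (⟨i, by simpa using hiN⟩ : Fin (bl m).length) = σ.symm z0 := by
        rw [← he, Equiv.symm_apply_apply]
      have := congrArg Fin.val this
      simp at this
      omega
    have hv1 : ((σ ⟨i, by simpa using hiN⟩ : Fin (bl m).length) : ℕ) ≠ 1 := by
      intro h
      have he : σ ⟨i, by simpa using hiN⟩ = z1 := Fin.ext (by rw [h, hz1])
      have : (⟨i, by simpa using hiN⟩ : Fin (bl m).length) = σ.symm z1 := by
        rw [← he, Equiv.symm_apply_apply]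
      have := congrArg Fin.val this
      simp at this
      omega
    rw [get_two hv0 hv1]

end Lists

section Chi
variable {K : Type*} [Field K] {m p : ℕ}

lemma dval {m : ℕ} (j : Fin (bl m).length) :
    ![(-1 : ℤ), 0, 1] ((bl m).get j)
      = if (j : ℕ) = 1 then 0 else if (j : ℕ) = 0 then -1 else 1 := by
  rw [bl_get]
  by_cases h0 : (j : ℕ) = 0 <;> by_cases h1 : (j : ℕ) = 1 <;> simp_all <;> omega

lemma neg_ksign (j j' : Fin (bl m).length) :
    (-1 : K) * ksign K (![(-1 : ℤ), 0, 1] ((bl m).get j) * ![(-1 : ℤ), 0, 1] ((bl m).get j'))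
      = if ((j : ℕ) = 1 ∨ (j' : ℕ) = 1) then -1 else 1 := by
  rw [dval, dval]
  unfold ksign
  by_cases h1 : (j : ℕ) = 1 <;> by_cases h1' : (j' : ℕ) = 1 <;>
    by_cases h0 : (j : ℕ) = 0 <;> by_cases h0' : (j' : ℕ) = 0 <;>
    simp_all <;> norm_num

lemma chi_bl (σ : Perm (Fin (bl m).length)) :
    chi K ![(-1 : ℤ), 0, 1] (bl m) σ
      = (-1 : K) ^ ((Finset.univ.filter
          (fun x : Fin (bl m).length × Fin (bl m).length =>
            (x.1 < x.2 ∧ σ x.2 < σ x.1) ∧ (((σ x.1 : Fin _) : ℕ) = 1 ∨ ((σ x.2 : Fin _) : ℕ) = 1))).card) := by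
  unfold chi
  rw [signK, ← Finset.prod_const, ← Finset.prod_mul_distrib]
  rw [Finset.prod_congr rfl (fun x _ => neg_ksign (σ x.1) (σ x.2))]
  rw [Finset.prod_ite, Finset.prod_const, Finset.prod_const_one, mul_one,
    Finset.filter_filter]

lemma chiA {σ : Perm (Fin (bl m).length)} {z0 z1 : Fin (bl m).length}
    (hz0 : (z0 : ℕ) = 0) (hz1 : (z1 : ℕ) = 1) (h0 : σ z0 = z0) (h1 : σ z1 = z1) :
    chi K ![(-1 : ℤ), 0, 1] (bl m) σ = 1 := by
  rw [chi_bl]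
  have : (Finset.univ.filter
      (fun x : Fin (bl m).length × Fin (bl m).length =>
        (x.1 < x.2 ∧ σ x.2 < σ x.1) ∧ (((σ x.1 : Fin _) : ℕ) = 1 ∨ ((σ x.2 : Fin _) : ℕ) = 1)))
      = ∅ := by
    rw [Finset.eq_empty_iff_forall_notMem]
    rintro x hx
    rw [Finset.mem_filter] at hx
    obtain ⟨-, ⟨hlt, hinv⟩, hor⟩ := hx
    rcases hor with hv | hv
    · have hx1 : x.1 = z1 := σ.injective ((Fin.ext (by rw [hv, hz1]) : σ x.1 = z1).trans h1.symm)
      have : σ x.2 < z1 := by rw [← h1, ← hx1]; exact hinv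
      have hv2 : ((σ x.2 : Fin _) : ℕ) = 0 := by
        have := (Fin.lt_def.mp this)
        omega
      have hx2 : x.2 = z0 := σ.injective ((Fin.ext (by rw [hv2, hz0]) : σ x.2 = z0).trans h0.symm)
      rw [hx1, hx2, Fin.lt_def, hz0, hz1] at hlt
      omega
    · have hx2 : x.2 = z1 := σ.injective ((Fin.ext (by rw [hv, hz1]) : σ x.2 = z1).trans h1.symm)
      have hlt1 : x.1 < z1 := hx2 ▸ hlt
      have hv1 : (x.1 : ℕ) = 0 := by
        have := Fin.lt_def.mp hlt1
        omega
      have hx1 : x.1 = z0 := Fin.ext (by rw [hv1, hz0])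
      rw [hx1, hx2, h0, h1, Fin.lt_def, hz0, hz1] at hinv
      omega
  rw [this]
  simp

lemma chiB {σ : Perm (Fin (bl m).length)} {z0 z1 zp : Fin (bl m).length}
    (hz0 : (z0 : ℕ) = 0) (hz1 : (z1 : ℕ) = 1) (hzp : (zp : ℕ) = p) (hp1 : 1 ≤ p)
    (h0 : σ z0 = z1) (hzp0 : σ zp = z0) :
    chi K ![(-1 : ℤ), 0, 1] (bl m) σ = -1 := by
  rw [chi_bl]
  have : (Finset.univ.filter
      (fun x : Fin (bl m).length × Fin (bl m).length =>
        (x.1 < x.2 ∧ σ x.2 < σ x.1) ∧ (((σ x.1 : Fin _) : ℕ) = 1 ∨ ((σ x.2 : Fin _) : ℕ) = 1)))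
      = {(z0, zp)} := by
    ext x
    rw [Finset.mem_filter, Finset.mem_singleton]
    constructor
    · rintro ⟨-, ⟨hlt, hinv⟩, hor⟩
      rcases hor with hv | hv
      · have hx1 : x.1 = z0 := σ.injective ((Fin.ext (by rw [hv, hz1]) : σ x.1 = z1).trans h0.symm)
        have : σ x.2 < z1 := by rw [← h0, ← hx1]; exact hinv
        have hv2 : ((σ x.2 : Fin _) : ℕ) = 0 := by
          have := Fin.lt_def.mp this
          omega
        have hx2 : x.2 = zp :=
          σ.injective ((Fin.ext (by rw [hv2, hz0]) : σ x.2 = z0).trans hzp0.symm)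
        exact Prod.ext hx1 hx2
      · have hx2 : x.2 = z0 := σ.injective ((Fin.ext (by rw [hv, hz1]) : σ x.2 = z1).trans h0.symm)
        have : x.1 < z0 := hx2 ▸ hlt
        rw [Fin.lt_def, hz0] at this
        omega
    · rintro rfl
      refine ⟨Finset.mem_univ _, ⟨?_, ?_⟩, Or.inl (by rw [h0, hz1])⟩
      · rw [Fin.lt_def, hz0, hzp]; omega
      · rw [h0, hzp0, Fin.lt_def, hz0, hz1]; omega
  rw [this]
  simp

end Chi

section Term
variable {K : Type*} [Field K]

lemma term_eval (a b c : ℕ → K) {m p : ℕ} {σ : Perm (Fin (bl m).length)}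
    (hσ : σ ∈ unshuffles p (bl m).length) (hp1 : 1 ≤ p) (hp : p ≤ (bl m).length)
    {z0 z1 : Fin (bl m).length} (hz0 : (z0 : ℕ) = 0) (hz1 : (z1 : ℕ) = 1) (j : Fin 3) :
    chi K ![(-1 : ℤ), 0, 1] (bl m) σ *
      (∑ i : Fin 3, ellm a b c ((List.ofFn (fun t => (bl m).get (σ t))).take p) i *
        ellm a b c (i :: (List.ofFn (fun t => (bl m).get (σ t))).drop p) j)
    = if ((σ.symm z0 : Fin _) : ℕ) < p ∧ ((σ.symm z1 : Fin _) : ℕ) < p then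
        (if j = 1 then a p * b ((bl m).length - p + 1) else 0)
      else if ((σ.symm z1 : Fin _) : ℕ) < p ∧ ¬ ((σ.symm z0 : Fin _) : ℕ) < p then
        (if j = 1 then -(c p * b ((bl m).length - p + 1)) else 0)
      else 0 := by
  have hlen := bl_len m
  by_cases hA0 : ((σ.symm z0 : Fin _) : ℕ) < p <;>
    by_cases hA1 : ((σ.symm z1 : Fin _) : ℕ) < p
  · -- case A
    obtain ⟨h0, h1⟩ := caseA_facts hσ hz0 hz1 hA0 hA1
    have hsymm1 : σ.symm z1 = z1 := (congrArg σ.symm h1).symm.trans (Equiv.symm_apply_apply σ z1)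
    have h2 : 2 ≤ p := by rw [hsymm1, hz1] at hA1; omega
    rw [takeA hp h2 hz0 hz1 h0 h1, dropA hp h2 hz0 hz1 h0 h1, chiA hz0 hz1 h0 h1]
    rw [ellm_E1 a b c (p - 2), Fin.sum_univ_three,
      ellm_E3 a b c ((bl m).length - p)]
    rw [if_pos ⟨hA0, hA1⟩]
    have e1 : p - 2 + 2 = p := by omega
    rw [e1]
    simp only [if_neg (show ¬(1:Fin 3) = 0 by decide), if_neg (show ¬(2:Fin 3) = 0 by decide),
      if_pos (rfl : (0:Fin 3) = 0), zero_mul, add_zero, one_mul]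
    split_ifs <;> ring
  · -- case C
    have hpN : p < (bl m).length := lt_of_le_of_lt (le_of_not_gt hA1) (σ.symm z1).2
    obtain ⟨h0, hzp1⟩ := caseC_facts (zp := ⟨p, hpN⟩) hσ hp1 hz0 hz1 rfl hA0 hA1
    rw [takeC hp hp1 hz0 hz1 h0 (le_of_not_gt hA1),
      dropC hpN hz0 hz1 rfl h0 hzp1]
    rw [ellm_E3 a b c (p - 1), Fin.sum_univ_three,
      ellm_E6 a b c ((bl m).length - p - 1)]
    rw [if_neg (by tauto), if_neg (by tauto)]
    simp only [if_neg (show ¬(0:Fin 3) = 1 by decide), if_neg (show ¬(2:Fin 3) = 1 by decide),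
      if_pos (rfl : (1:Fin 3) = 1), Pi.zero_apply, zero_mul, mul_zero, add_zero, zero_add]
  · -- case B
    have hpN : p < (bl m).length := lt_of_le_of_lt (le_of_not_gt hA0) (σ.symm z0).2
    obtain ⟨h0, hzp0⟩ := caseB_facts (zp := ⟨p, hpN⟩) hσ hp1 hz0 hz1 rfl hA0 hA1
    rw [takeB hp hp1 hz0 hz1 h0 (le_of_not_gt hA0),
      dropB hpN hz0 hz1 rfl h0 hzp0, chiB hz0 hz1 rfl hp1 h0 hzp0]
    rw [ellm_E2 a b c (p - 1), Fin.sum_univ_three,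
      ellm_E4 a b c ((bl m).length - p - 1)]
    rw [if_neg (by tauto), if_pos ⟨hA1, hA0⟩]
    have e1 : p - 1 + 1 = p := by omega
    have e2 : (bl m).length - p - 1 + 2 = (bl m).length - p + 1 := by omega
    rw [e1, e2]
    simp only [if_neg (show ¬(0:Fin 3) = 2 by decide), if_neg (show ¬(1:Fin 3) = 2 by decide),
      if_pos (rfl : (2:Fin 3) = 2), zero_mul, add_zero, zero_add]
    split_ifs <;> ring
  · -- case D
    rw [takeD hp hz0 hz1 (le_of_not_gt hA0) (le_of_not_gt hA1)]
    rw [ellm_E5, Fin.sum_univ_three]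
    rw [if_neg (by tauto), if_neg (by tauto)]
    simp only [Pi.zero_apply, zero_mul, add_zero, mul_zero, zero_add]

end Term

section Main
variable {K : Type*} [Field K]

lemma innerSumJ (a b c : ℕ → K) (ha : a 1 = 0) {m p : ℕ} (hp1 : 1 ≤ p)
    (hp : p ≤ (bl m).length) (j : Fin 3) :
    (∑ σ ∈ unshuffles p (bl m).length,
      chi K ![(-1 : ℤ), 0, 1] (bl m) σ *
        (∑ i : Fin 3, ellm a b c ((List.ofFn (fun t => (bl m).get (σ t))).take p) i *
          ellm a b c (i :: (List.ofFn (fun t => (bl m).get (σ t))).drop p) j))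
    = if j = 1 then ((m.choose (p - 2) : K) * (a p * b ((bl m).length - p + 1))
        - (m.choose (p - 1) : K) * (c p * b ((bl m).length - p + 1))) else 0 := by
  have hlen := bl_len m
  set z0 : Fin (bl m).length := ⟨0, by omega⟩ with hz0def
  set z1 : Fin (bl m).length := ⟨1, by omega⟩ with hz1def
  have hz0 : (z0 : ℕ) = 0 := rfl
  have hz1 : (z1 : ℕ) = 1 := rfl
  have hzne : z0 ≠ z1 := fun h => by simpa using congrArg Fin.val h
  by_cases hj : j = 1
  case neg =>
    rw [if_neg hj]
    apply Finset.sum_eq_zero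
    intro σ hσ
    rw [term_eval a b c hσ hp1 hp hz0 hz1 j]
    simp [hj]
  subst hj
  set X : K := a p * b ((bl m).length - p + 1) with hX
  set Y : K := -(c p * b ((bl m).length - p + 1)) with hY
  have step1 : (∑ σ ∈ unshuffles p (bl m).length,
      chi K ![(-1 : ℤ), 0, 1] (bl m) σ *
        (∑ i : Fin 3, ellm a b c ((List.ofFn (fun t => (bl m).get (σ t))).take p) i *
          ellm a b c (i :: (List.ofFn (fun t => (bl m).get (σ t))).drop p) (1 : Fin 3)))
      = ∑ S ∈ Finset.powersetCard p (Finset.univ : Finset (Fin (bl m).length)),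
          ((if z0 ∈ S ∧ z1 ∈ S then X else 0) + (if z1 ∈ S ∧ z0 ∉ S then Y else 0)) := by
    refine Finset.sum_nbij'
      (i := fun σ => Finset.univ.filter fun y => ((σ.symm y : Fin _) : ℕ) < p)
      (j := fun S => if h : S.card = p then shufPerm S h hp else 1) ?_ ?_ ?_ ?_ ?_
    · intro σ hσ
      rw [Finset.mem_powersetCard]
      exact ⟨Finset.subset_univ _, unshuffles_filter_card hσ hp⟩
    · intro S hS
      rw [Finset.mem_powersetCard] at hS
      beta_reduce
      rw [dif_pos hS.2]
      exact shufPerm_mem _ _ _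
    · intro σ hσ
      beta_reduce
      rw [dif_pos (unshuffles_filter_card hσ hp)]
      exact (unshuffle_eq_shufPerm hσ hp).symm
    · intro S hS
      rw [Finset.mem_powersetCard] at hS
      beta_reduce
      rw [dif_pos hS.2]
      ext y
      simp [shufPerm_symm_lt_iff]
    · intro σ hσ
      rw [term_eval a b c hσ hp1 hp hz0 hz1 (1 : Fin 3)]
      simp only [Finset.mem_filter, Finset.mem_univ, true_and]
      by_cases hA0 : ((σ.symm z0 : Fin _) : ℕ) < p <;>
        by_cases hA1 : ((σ.symm z1 : Fin _) : ℕ) < p <;>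
        simp [hA0, hA1, hX, hY]
  rw [step1, Finset.sum_add_distrib, ← Finset.sum_filter, ← Finset.sum_filter,
    Finset.sum_const, Finset.sum_const]
  have hm2 : (bl m).length - 2 = m := by omega
  rw [if_pos rfl]
  by_cases hp2 : 2 ≤ p
  · rw [card_filter_both hp2 z0 z1 hzne, card_filter_one hp1 z0 z1 hzne, hm2]
    rw [nsmul_eq_mul, nsmul_eq_mul, hX, hY]
    ring
  · have hpe : p = 1 := by omega
    subst hpe
    rw [card_filter_both_one z0 z1 hzne, card_filter_one le_rfl z0 z1 hzne, hm2]
    rw [zero_smul, nsmul_eq_mul, hX, hY]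
    simp [ha]

end Main

theorem stmt13' {K : Type*} [Field K] [CharZero K] (a b c : ℕ → K) (ha : a 1 = 0)
    (n : ℕ) (hn : 2 ≤ n) :
    Jac K ![-1, 0, 1] (ellm a b c) ((0 : Fin 3) :: 1 :: List.replicate (n - 2) 2) =
      fun j : Fin 3 => if j = 1 then
        ∑ p ∈ Finset.Icc 1 n, (-1 : K) ^ (p * (n - p)) * b (n - p + 1) *
          (((n - 2).choose (p - 2) : K) * a p - ((n - 2).choose (p - 1) : K) * c p)
      else 0 := by
  obtain ⟨m, rfl⟩ : ∃ m, n = m + 2 := ⟨n - 2, by omega⟩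
  show Jac K ![-1, 0, 1] (ellm a b c) (bl m) = _
  unfold Jac
  funext j
  simp only [Finset.sum_apply, Pi.smul_apply, smul_eq_mul]
  trans (∑ q ∈ Finset.Icc 1 (bl m).length, (-1 : K) ^ (q * ((bl m).length - q)) *
      (if j = 1 then ((m.choose (q - 2) : K) * (a q * b ((bl m).length - q + 1))
        - (m.choose (q - 1) : K) * (c q * b ((bl m).length - q + 1))) else 0))
  · exact Finset.sum_congr rfl (fun q hq => by
      rw [innerSumJ a b c ha (Finset.mem_Icc.mp hq).1 (Finset.mem_Icc.mp hq).2 j])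
  by_cases hj : j = 1
  · simp only [hj, if_pos rfl, bl_len, if_true]
    apply Finset.sum_congr rfl
    intro p hp
    have h1 : m + 2 - 2 = m := by omega
    rw [h1]
    ring
  · simp [hj]

/-- Explicit formula for `Jₙ(u ⊗ v ⊗ w^{⊗(n-2)})` on `V₋₁ ⊕ V₀ ⊕ V₁`. -/
theorem stmt13 {K : Type*} [Field K] [CharZero K] (a b c : ℕ → K) (ha : a 1 = 0)
    (n : ℕ) (hn : 2 ≤ n) :
    Jac K ![-1, 0, 1] (ellm a b c) ((0 : Fin 3) :: 1 :: List.replicate (n - 2) 2) =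
      fun j : Fin 3 => if j = 1 then
        ∑ p ∈ Finset.Icc 1 n, (-1 : K) ^ (p * (n - p)) * b (n - p + 1) *
          (((n - 2).choose (p - 2) : K) * a p - ((n - 2).choose (p - 1) : K) * c p)
      else 0 := by
  exact stmt13' a b c ha n hn
end Unshuf
end

section
/- Let (aₙ), (bₙ), (cₙ) be sequences in a field of characteristic zero with a₁ = 0. Suppose 1 ≤ k ≤ m, b_k ≠ 0, and b_p = 0 for all p < k. Then the following three families of identities hold for all n ≤ m: (I) Σ_{p=1}^n (−1)^{p(n−p)} C(n−1, p−1) b_p c_{n−p+1} = 0, (II) Σ_{p=1}^{n−1} (−1)^{p(n−p)} C(n−2, p−1) b_p a_{n−p+1} = 0, (III) Σ_{p=1}^n (−1)^{p(n−p)} b_{n−p+1} [ C(n−2, p−2)·a_p − C(n−2, p−1)·c_p ] = 0, if and only if a_q = c_q = 0 for all q ≤ m−k+1. -/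
open Finset Equiv

/-- Reduction of `Jₙ = 0` on `u ⊗ w^{⊗(n-1)}` for `V₋₁ ⊕ V₀ ⊕ V₁`. -/
def S1 {K : Type*} [Field K] (b c : ℕ → K) (n : ℕ) : K :=
  ∑ p ∈ Finset.Icc 1 n, (-1 : K) ^ (p * (n - p)) * ((n - 1).choose (p - 1) : K) *
    b p * c (n - p + 1)

/-- Reduction of `Jₙ = 0` on `u ⊗ u ⊗ w^{⊗(n-2)}` for `V₋₁ ⊕ V₀ ⊕ V₁`. -/
def S2 {K : Type*} [Field K] (a b : ℕ → K) (n : ℕ) : K :=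
  ∑ p ∈ Finset.Icc 1 (n - 1), (-1 : K) ^ (p * (n - p)) * ((n - 2).choose (p - 1) : K) *
    b p * a (n - p + 1)

/-- Reduction of `Jₙ = 0` on `u ⊗ v ⊗ w^{⊗(n-2)}` for `V₋₁ ⊕ V₀ ⊕ V₁`. -/
def S3 {K : Type*} [Field K] (a b c : ℕ → K) (n : ℕ) : K :=
  ∑ p ∈ Finset.Icc 1 n, (-1 : K) ^ (p * (n - p)) * b (n - p + 1) *
    (((n - 2).choose (p - 2) : K) * a p - ((n - 2).choose (p - 1) : K) * c p)

/-- If `b_p = 0` for `p < k` and `b_k ≠ 0` with `1 ≤ k ≤ m`, then the first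
`m` Jacobi identities for `V₋₁ ⊕ V₀ ⊕ V₁` hold iff `a_q = c_q = 0` for all
`q ≤ m - k + 1`. -/
theorem stmt14 {K : Type*} [Field K] [CharZero K] (a b c : ℕ → K) (ha : a 1 = 0)
    (k m : ℕ) (hk1 : 1 ≤ k) (hkm : k ≤ m)
    (hbk : b k ≠ 0) (hb0 : ∀ p : ℕ, p < k → b p = 0) :
    (∀ n : ℕ, 1 ≤ n → n ≤ m → S1 b c n = 0 ∧ S2 a b n = 0 ∧ S3 a b c n = 0) ↔
      (∀ q : ℕ, 1 ≤ q → q ≤ m - k + 1 → a q = 0 ∧ c q = 0) := by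
  constructor
  · intro H
    intro q
    induction q using Nat.strong_induction_on with
    | _ q ih =>
      intro hq1 hqm
      set n := q + k - 1 with hn
      have hkn : k ≤ n := by omega
      have hnm : n ≤ m := by omega
      have hn1 : 1 ≤ n := by omega
      have hnk : n - k + 1 = q := by omega
      -- c q = 0 from S1 at n
      have hS1 : S1 b c n = 0 := (H n hn1 hnm).1
      have hcq : c q = 0 := by
        have hsingle : S1 b c n =
            (-1 : K) ^ (k * (n - k)) * ((n - 1).choose (k - 1) : K) * b k * c (n - k + 1) := by
          unfold S1
          apply Finset.sum_eq_single_of_mem k (by simp [Finset.mem_Icc]; omega)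
          intro p hp hpk
          simp only [Finset.mem_Icc] at hp
          rcases lt_or_gt_of_ne hpk with hlt | hgt
          · rw [hb0 p hlt, mul_zero, zero_mul]
          · have hcz : c (n - p + 1) = 0 := by
              have h1 : n - p + 1 < q := by omega
              exact (ih (n - p + 1) h1 (by omega) (by omega)).2
            rw [hcz, mul_zero]
        rw [hsingle, hnk] at hS1
        have hne : (-1 : K) ^ (k * (n - k)) * ((n - 1).choose (k - 1) : K) * b k ≠ 0 := by
          refine mul_ne_zero (mul_ne_zero (pow_ne_zero _ (neg_ne_zero.mpr one_ne_zero)) ?_) hbk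
          exact_mod_cast Nat.cast_ne_zero.mpr (Nat.choose_pos (by omega)).ne'
        exact (mul_eq_zero.mp hS1).resolve_left hne
      refine ⟨?_, hcq⟩
      -- a q = 0
      rcases eq_or_lt_of_le hq1 with h1 | hq2
      · rw [← h1]; exact ha
      · -- q ≥ 2, use S2 at n
        have hS2 : S2 a b n = 0 := (H n hn1 hnm).2.1
        have hsingle : S2 a b n =
            (-1 : K) ^ (k * (n - k)) * ((n - 2).choose (k - 1) : K) * b k * a (n - k + 1) := by
          unfold S2
          apply Finset.sum_eq_single_of_mem k (by simp [Finset.mem_Icc]; omega)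
          intro p hp hpk
          simp only [Finset.mem_Icc] at hp
          rcases lt_or_gt_of_ne hpk with hlt | hgt
          · rw [hb0 p hlt, mul_zero, zero_mul]
          · have haz : a (n - p + 1) = 0 := by
              have h1 : n - p + 1 < q := by omega
              exact (ih (n - p + 1) h1 (by omega) (by omega)).1
            rw [haz, mul_zero]
        rw [hsingle, hnk] at hS2
        have hne : (-1 : K) ^ (k * (n - k)) * ((n - 2).choose (k - 1) : K) * b k ≠ 0 := by
          refine mul_ne_zero (mul_ne_zero (pow_ne_zero _ (neg_ne_zero.mpr one_ne_zero)) ?_) hbk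
          exact_mod_cast Nat.cast_ne_zero.mpr (Nat.choose_pos (by omega)).ne'
        exact (mul_eq_zero.mp hS2).resolve_left hne
  · intro h n hn1 hnm
    refine ⟨?_, ?_, ?_⟩
    · unfold S1
      apply Finset.sum_eq_zero
      intro p hp
      simp only [Finset.mem_Icc] at hp
      by_cases hpk : p < k
      · rw [hb0 p hpk, mul_zero, zero_mul]
      · have : c (n - p + 1) = 0 := (h (n - p + 1) (by omega) (by omega)).2
        rw [this, mul_zero]
    · unfold S2
      apply Finset.sum_eq_zero
      intro p hp
      simp only [Finset.mem_Icc] at hp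
      by_cases hpk : p < k
      · rw [hb0 p hpk, mul_zero, zero_mul]
      · have : a (n - p + 1) = 0 := (h (n - p + 1) (by omega) (by omega)).1
        rw [this, mul_zero]
    · unfold S3
      apply Finset.sum_eq_zero
      intro p hp
      simp only [Finset.mem_Icc] at hp
      by_cases hpk : n - p + 1 < k
      · rw [hb0 _ hpk, mul_zero, zero_mul]
      · have hap : a p = 0 := (h p (by omega) (by omega)).1
        have hcp : c p = 0 := (h p (by omega) (by omega)).2
        rw [hap, hcp, mul_zero, mul_zero, sub_zero, mul_zero]
end

section
/- Let (aₙ), (bₙ), (cₙ) be sequences in a field of characteristic zero with a₁ = 0 that satisfy, for every n ∈ ℕ, the three Jacobi constraints of V₋₁ ⊕ V₀ ⊕ V₁ (i.e., V carries an L∞ structure). If bₘ ≠ 0 for some m ∈ ℕ, then aₙ = 0 and cₙ = 0 for all n ∈ ℕ. -/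
open Finset Equiv

/-- In an L∞ structure on `V₋₁ ⊕ V₀ ⊕ V₁`, if some `bₘ ≠ 0` then all `aₙ` and
`cₙ` vanish. -/
theorem stmt16 {K : Type*} [Field K] [CharZero K] (a b c : ℕ → K) (ha : a 1 = 0)
    (hJ : ∀ n : ℕ, 1 ≤ n → S1 b c n = 0 ∧ S2 a b n = 0 ∧ S3 a b c n = 0)
    (m : ℕ) (hm : 1 ≤ m) (hbm : b m ≠ 0) :
    ∀ n : ℕ, 1 ≤ n → a n = 0 ∧ c n = 0 := by
  classical
  have hex : ∃ p, 1 ≤ p ∧ b p ≠ 0 := ⟨m, hm, hbm⟩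
  set M := Nat.find hex with hMdef
  obtain ⟨hM1, hbM⟩ := Nat.find_spec hex
  have hbsmall : ∀ p, 1 ≤ p → p < M → b p = 0 := by
    intro p hp hplt
    by_contra h
    exact Nat.find_min hex hplt ⟨hp, h⟩
  intro n
  induction n using Nat.strong_induction_on with
  | _ n IH =>
    intro hn
    have hc : c n = 0 := by
      have hS := (hJ (M + n - 1) (by omega)).1
      rw [S1, Finset.sum_eq_single_of_mem M (by simp [Finset.mem_Icc]; omega)] at hS
      · have h1 : M + n - 1 - M + 1 = n := by omega
        have h2 : M + n - 1 - 1 = M + n - 2 := by omega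
        rw [h1, h2] at hS
        have hch : ((M + n - 2).choose (M - 1) : K) ≠ 0 := by
          exact_mod_cast Nat.cast_ne_zero.mpr (Nat.choose_pos (by omega)).ne'
        have hsgn : ((-1 : K) ^ (M * (M + n - 1 - M))) ≠ 0 := by
          exact pow_ne_zero _ (by norm_num)
        rcases mul_eq_zero.mp hS with h | h
        · rcases mul_eq_zero.mp h with h | h
          · rcases mul_eq_zero.mp h with h | h
            · exact absurd h hsgn
            · exact absurd h hch
          · exact absurd h hbM
        · exact h
      · intro p hp hpne
        simp only [Finset.mem_Icc] at hp
        rcases lt_or_gt_of_ne hpne with hlt | hgt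
        · rw [hbsmall p hp.1 hlt]; ring
        · have h3 : M + n - 1 - p + 1 = M + n - p := by omega
          rw [h3, (IH (M + n - p) (by omega) (by omega)).2]; ring
    have haa : a n = 0 := by
      rcases eq_or_lt_of_le hn with h1 | h2
      · rw [← h1]; exact ha
      · have hS := (hJ (M + n - 1) (by omega)).2.1
        rw [S2, Finset.sum_eq_single_of_mem M (by simp [Finset.mem_Icc]; omega)] at hS
        · have h1 : M + n - 1 - M + 1 = n := by omega
          have h2 : M + n - 1 - 2 = M + n - 3 := by omega
          rw [h1, h2] at hS
          have hch : ((M + n - 3).choose (M - 1) : K) ≠ 0 := by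
            exact_mod_cast Nat.cast_ne_zero.mpr (Nat.choose_pos (by omega)).ne'
          have hsgn : ((-1 : K) ^ (M * (M + n - 1 - M))) ≠ 0 := by
            exact pow_ne_zero _ (by norm_num)
          rcases mul_eq_zero.mp hS with h | h
          · rcases mul_eq_zero.mp h with h | h
            · rcases mul_eq_zero.mp h with h | h
              · exact absurd h hsgn
              · exact absurd h hch
            · exact absurd h hbM
          · exact h
        · intro p hp hpne
          simp only [Finset.mem_Icc] at hp
          rcases lt_or_gt_of_ne hpne with hlt | hgt
          · rw [hbsmall p hp.1 hlt]; ring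
          · have h3 : M + n - 1 - p + 1 = M + n - p := by omega
            rw [h3, (IH (M + n - p) (by omega) (by omega)).1]; ring
    exact ⟨haa, hc⟩
end

section
/- Every L∞ structure on V = V₋₁ ⊕ V₀ ⊕ V₁ (one-dimensional components, structure constants aₙ, bₙ, cₙ with a₁ = 0) has one of the following two forms: either bₙ = 0 for all n (with aₙ, cₙ arbitrary), or bₘ ≠ 0 for some m and then aₙ = cₙ = 0 for all n. Conversely, both forms define L∞ structures. -/
open Finset Equiv

/-- Every L∞ structure on `V₋₁ ⊕ V₀ ⊕ V₁` has one of two forms: all `bₙ = 0`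
(with `aₙ, cₙ` arbitrary), or some `bₘ ≠ 0` and then all `aₙ = cₙ = 0`; and
conversely both forms define L∞ structures. -/
theorem stmt17 {K : Type*} [Field K] [CharZero K] (a b c : ℕ → K) (ha : a 1 = 0) :
    (∀ n : ℕ, 1 ≤ n → S1 b c n = 0 ∧ S2 a b n = 0 ∧ S3 a b c n = 0) ↔
      ((∀ n : ℕ, 1 ≤ n → b n = 0) ∨
        ((∃ m : ℕ, 1 ≤ m ∧ b m ≠ 0) ∧ ∀ n : ℕ, 1 ≤ n → a n = 0 ∧ c n = 0)) := by
  classical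
  constructor
  · intro h
    by_cases hb : ∀ n : ℕ, 1 ≤ n → b n = 0
    · exact Or.inl hb
    · push_neg at hb
      obtain ⟨m0, hm01, hm0⟩ := hb
      -- take the least m with b m ≠ 0
      have hex : ∃ m, 1 ≤ m ∧ b m ≠ 0 := ⟨m0, hm01, hm0⟩
      set m := Nat.find hex with hmdef
      obtain ⟨hm1, hbm⟩ := Nat.find_spec hex
      have hmin : ∀ p, p < m → 1 ≤ p → b p = 0 := by
        intro p hp hp1
        by_contra hbp
        exact Nat.find_min hex hp ⟨hp1, hbp⟩
      -- c k = 0 for all k ≥ 1, by strong induction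
      have hc : ∀ k : ℕ, 1 ≤ k → c k = 0 := by
        intro k
        induction k using Nat.strong_induction_on with
        | _ k ih =>
          intro hk1
          have hS1 := (h (m + k - 1) (by omega)).1
          rw [S1] at hS1
          have hsingle : ∑ p ∈ Finset.Icc 1 (m + k - 1),
              (-1 : K) ^ (p * (m + k - 1 - p)) * ((m + k - 1 - 1).choose (p - 1) : K) *
                b p * c (m + k - 1 - p + 1)
              = (-1 : K) ^ (m * (m + k - 1 - m)) * ((m + k - 1 - 1).choose (m - 1) : K) *
                b m * c k := by
            rw [Finset.sum_eq_single_of_mem m (by simp [Finset.mem_Icc]; omega)]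
            · have hidx : m + k - 1 - m + 1 = k := by omega
              rw [hidx]
            · intro p hp hpm
              simp only [Finset.mem_Icc] at hp
              rcases lt_or_gt_of_ne hpm with hlt | hgt
              · rw [hmin p hlt hp.1]; ring
              · rw [ih (m + k - 1 - p + 1) (by omega) (by omega)]; ring
          rw [hsingle] at hS1
          have hch : ((m + k - 1 - 1).choose (m - 1) : K) ≠ 0 := by
            exact_mod_cast Nat.cast_ne_zero.mpr (Nat.choose_pos (by omega)).ne'
          have hsgn : ((-1 : K) ^ (m * (m + k - 1 - m))) ≠ 0 := by
            exact pow_ne_zero _ (by norm_num)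
          rcases mul_eq_zero.mp hS1 with h' | hck
          · rcases mul_eq_zero.mp h' with h'' | hb'
            · rcases mul_eq_zero.mp h'' with h3 | h4
              · exact absurd h3 hsgn
              · exact absurd h4 hch
            · exact absurd hb' hbm
          · exact hck
      -- a k = 0 for all k ≥ 1, by strong induction
      have hac : ∀ k : ℕ, 1 ≤ k → a k = 0 := by
        intro k
        induction k using Nat.strong_induction_on with
        | _ k ih =>
          intro hk1
          rcases Nat.lt_or_ge k 2 with hk2 | hk2
          · have : k = 1 := by omega
            rw [this]; exact ha
          have hS2 := (h (m + k - 1) (by omega)).2.1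
          rw [S2] at hS2
          have hsingle : ∑ p ∈ Finset.Icc 1 (m + k - 1 - 1),
              (-1 : K) ^ (p * (m + k - 1 - p)) * ((m + k - 1 - 2).choose (p - 1) : K) *
                b p * a (m + k - 1 - p + 1)
              = (-1 : K) ^ (m * (m + k - 1 - m)) * ((m + k - 1 - 2).choose (m - 1) : K) *
                b m * a k := by
            rw [Finset.sum_eq_single_of_mem m (by simp [Finset.mem_Icc]; omega)]
            · have hidx : m + k - 1 - m + 1 = k := by omega
              rw [hidx]
            · intro p hp hpm
              simp only [Finset.mem_Icc] at hp
              rcases lt_or_gt_of_ne hpm with hlt | hgt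
              · rw [hmin p hlt hp.1]; ring
              · rw [ih (m + k - 1 - p + 1) (by omega) (by omega)]; ring
          rw [hsingle] at hS2
          have hch : ((m + k - 1 - 2).choose (m - 1) : K) ≠ 0 := by
            exact_mod_cast Nat.cast_ne_zero.mpr (Nat.choose_pos (by omega)).ne'
          have hsgn : ((-1 : K) ^ (m * (m + k - 1 - m))) ≠ 0 := by
            exact pow_ne_zero _ (by norm_num)
          rcases mul_eq_zero.mp hS2 with h' | hck
          · rcases mul_eq_zero.mp h' with h'' | hb'
            · rcases mul_eq_zero.mp h'' with h3 | h4
              · exact absurd h3 hsgn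
              · exact absurd h4 hch
            · exact absurd hb' hbm
          · exact hck
      exact Or.inr ⟨⟨m, hm1, hbm⟩, fun n hn => ⟨hac n hn, hc n hn⟩⟩
  · rintro (hb | ⟨_, hac⟩) <;> intro n hn <;>
      refine ⟨Finset.sum_eq_zero ?_, Finset.sum_eq_zero ?_, Finset.sum_eq_zero ?_⟩ <;>
      intro p hp <;> simp only [Finset.mem_Icc] at hp
    · rw [hb p hp.1]; ring
    · rw [hb p hp.1]; ring
    · rw [hb (n - p + 1) (by omega)]; ring
    · rw [(hac (n - p + 1) (by omega)).2]; ring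
    · rw [(hac (n - p + 1) (by omega)).1]; ring
    · rw [(hac p hp.1).1, (hac p hp.1).2]; ring
end

section
/- Let V = V₋₁ ⊕ V₀ ⊕ V₁ with one-dimensional components and structure constants (aₙ), (bₙ), (cₙ) (a₁ = 0) satisfying the L₃ conditions (J₁ = J₂ = J₃ = 0). Then b₂a₂ = 0 and b₂c₂ = 0; hence every L₃ structure on V₋₁ ⊕ V₀ ⊕ V₁ is a differential graded Lie algebra. -/
open Finset Equiv

/-- Every `L₃` structure on `V₋₁ ⊕ V₀ ⊕ V₁` is a d.g. Lie algebra: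
`b₂a₂ = 0` and `b₂c₂ = 0`. -/
theorem stmt18 {K : Type*} [Field K] [CharZero K] (a b c : ℕ → K) (ha : a 1 = 0)
    (hJ : ∀ n : ℕ, 1 ≤ n → n ≤ 3 → S1 b c n = 0 ∧ S2 a b n = 0 ∧ S3 a b c n = 0) :
    b 2 * a 2 = 0 ∧ b 2 * c 2 = 0 := by
  obtain ⟨h11, h21, h31⟩ := hJ 1 (by norm_num) (by norm_num)
  obtain ⟨h12, h22, h32⟩ := hJ 2 (by norm_num) (by norm_num)
  obtain ⟨h13, h23, h33⟩ := hJ 3 (by norm_num) (by norm_num)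
  simp only [S1, S2, S3, show (Finset.Icc 1 1 : Finset ℕ) = {1} from rfl,
    show (Finset.Icc 1 2 : Finset ℕ) = {1, 2} from rfl,
    show (Finset.Icc 1 3 : Finset ℕ) = {1, 2, 3} from rfl,
    Finset.sum_insert, Finset.sum_singleton, Finset.mem_insert, Finset.mem_singleton]
    at h11 h21 h31 h12 h22 h32 h13 h23 h33
  norm_num [ha] at h11 h21 h31 h12 h22 h32 h13 h23 h33
  by_cases hb1 : b 1 = 0
  · rw [hb1] at h23 h32 h13 h33
    ring_nf at h23 h32 h13 h33
    refine ⟨h23, ?_⟩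
    linear_combination h13 + h33 - h23
  · have hc1 : c 1 = 0 := by
      simp [hb1] at h11; tauto
    have ha2 : a 2 = 0 := by
      simp [hb1] at h22; tauto
    have hc2 : c 2 = 0 := by
      rw [hc1] at h12; simp at h12
      exact h12.resolve_left hb1
    simp [ha2, hc2]
end
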